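/- arXiv:1106.0965 — 4 statements merged into one kernel-verified Lean document; each statement's English description precedes it below -/
import Mathlib

section
/- Let α > 0, 0 ≤ a < x be real numbers and let f : ℝ → ℝ be continuous on [a, x]. Then the limit as ρ → 1 of the generalized fractional integral (ρI^α_{a+} f)(x) equals the Riemann–Liouville fractional integral (I^α_{a+} f)(x) = (1/Γ(α)) · ∫_a^x (x − τ)^(α−1) f(τ) dτ. -/
open MeasureTheory Real Filter

private lemma gfi_aux_lower (x : ℝ) (hx : 0 < x) {ρ τ : ℝ} (hρ1 : (1/2 : ℝ) ≤ ρ)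
    (hρ2 : ρ ≤ (3/2 : ℝ)) (hτ0 : 0 < τ) (hτx : τ < x) :
    min (x ^ (-(1/2) : ℝ)) (x ^ ((1/2) : ℝ)) / 2 * (x - τ) ≤ x ^ ρ - τ ^ ρ := by
  set c0 := min (x ^ (-(1/2) : ℝ)) (x ^ ((1/2) : ℝ)) with hc0def
  set u := τ / x with hudef
  have hu0 : 0 < u := div_pos hτ0 hx
  have hu1 : u < 1 := (div_lt_one hx).2 hτx
  have hτρ : τ ^ ρ = u ^ ρ * x ^ ρ := by
    rw [← Real.mul_rpow hu0.le hx.le, div_mul_cancel₀ _ hx.ne']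
  -- 1 - u^ρ ≥ (1-u)/2
  have h1 : u ^ ρ ≤ u ^ ((1/2 : ℝ)) := Real.rpow_le_rpow_of_exponent_ge hu0 hu1.le hρ1
  set s := u ^ ((1/2 : ℝ)) with hsdef
  have hs0 : 0 ≤ s := Real.rpow_nonneg hu0.le _
  have hs1 : s ≤ 1 := Real.rpow_le_one hu0.le hu1.le (by norm_num)
  have hss : s * s = u := by
    rw [hsdef, ← Real.rpow_add hu0]; norm_num
  have hkey : (1 - u) / 2 ≤ 1 - u ^ ρ := by nlinarith [sq_nonneg (1 - s)]
  -- x ^ (ρ - 1) ≥ c0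
  have hxρ1 : c0 ≤ x ^ (ρ - 1) := by
    rcases le_total 1 x with hx1 | hx1
    · refine le_trans (min_le_left _ _) ?_
      exact Real.rpow_le_rpow_of_exponent_le hx1 (by linarith)
    · refine le_trans (min_le_right _ _) ?_
      exact Real.rpow_le_rpow_of_exponent_ge hx hx1 (by linarith)
  have hxρ : x ^ ρ = x ^ (ρ - 1) * x := by
    rw [← Real.rpow_add_one hx.ne' (ρ - 1)]; ring_nf
  have hxu : x * (1 - u) = x - τ := by
    rw [hudef, mul_sub, mul_one, mul_div_assoc', mul_div_cancel_left₀ _ hx.ne']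
  have hxρpos : (0:ℝ) < x ^ (ρ - 1) := Real.rpow_pos_of_pos hx _
  calc c0 / 2 * (x - τ) ≤ x ^ (ρ - 1) / 2 * (x - τ) := by
        apply mul_le_mul_of_nonneg_right _ (by linarith)
        linarith
    _ = x ^ (ρ - 1) * (x * (1 - u)) / 2 := by rw [hxu]; ring
    _ = x ^ ρ * ((1 - u) / 2) := by rw [hxρ]; ring
    _ ≤ x ^ ρ * (1 - u ^ ρ) := by
        apply mul_le_mul_of_nonneg_left hkey (Real.rpow_nonneg hx.le _)
    _ = x ^ ρ - τ ^ ρ := by rw [hτρ]; ring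

/-- For α > 0, 0 ≤ a < x and f continuous on [a, x], the limit as ρ → 1 of the
generalized fractional integral (ρI^α_{a+} f)(x) equals the Riemann–Liouville fractional
integral (I^α_{a+} f)(x). -/
theorem generalized_fractional_integral_tendsto_riemannLiouville
    (α a x : ℝ) (hα : 0 < α) (ha : 0 ≤ a) (hax : a < x)
    (f : ℝ → ℝ) (hf : ContinuousOn f (Set.Icc a x)) :
    Tendsto
      (fun ρ : ℝ => (ρ ^ (1 - α) / Real.Gamma α) *
        ∫ τ in a..x, τ ^ (ρ - 1) * (x ^ ρ - τ ^ ρ) ^ (α - 1) * f τ)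
      (nhds 1)
      (nhds ((1 / Real.Gamma α) * ∫ τ in a..x, (x - τ) ^ (α - 1) * f τ)) := by
  have hx : 0 < x := lt_of_le_of_lt ha hax
  -- constants
  set c0 := min (x ^ (-(1/2) : ℝ)) (x ^ ((1/2) : ℝ)) with hc0def
  have hc0 : 0 < c0 := lt_min (Real.rpow_pos_of_pos hx _) (Real.rpow_pos_of_pos hx _)
  set β := min (α - 1) 0 with hβdef
  have hβ0 : β ≤ 0 := min_le_right _ _
  have hβ1 : -1 < β := lt_min (by linarith) (by norm_num)
  set D := (max 1 x) ^ ((3/2 : ℝ)) with hDdef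
  have hD0 : (0:ℝ) ≤ D := Real.rpow_nonneg (le_trans zero_le_one (le_max_left _ _)) _
  set C := max (D ^ (α - 1)) ((c0/2) ^ (α - 1)) with hCdef
  have hC0 : (0:ℝ) ≤ C := le_trans (Real.rpow_nonneg hD0 _) (le_max_left _ _)
  obtain ⟨M, hM⟩ := isCompact_Icc.exists_bound_of_continuousOn hf
  have hM0 : 0 ≤ M := le_trans (norm_nonneg _) (hM a ⟨le_refl a, le_of_lt hax⟩)
  -- the key upper bound
  have hupper : ∀ ρ ∈ Set.Ioo (1/2 : ℝ) (3/2 : ℝ), ∀ τ ∈ Set.Ioo 0 x,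
      (x ^ ρ - τ ^ ρ) ^ (α - 1) ≤ C * (x - τ) ^ β := by
    intro ρ hρ τ hτ
    have hlow := gfi_aux_lower x hx hρ.1.le hρ.2.le hτ.1 hτ.2
    have hsub : (0:ℝ) < x ^ ρ - τ ^ ρ :=
      lt_of_lt_of_le (mul_pos (half_pos hc0) (by linarith [hτ.2])) hlow
    rcases le_or_gt 1 α with h1α | h1α
    · have hβeq : β = 0 := min_eq_right (by linarith)
      rw [hβeq, Real.rpow_zero, mul_one]
      have hxρD : x ^ ρ - τ ^ ρ ≤ D := by
        have h1 : x ^ ρ - τ ^ ρ ≤ x ^ ρ := by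
          have := Real.rpow_nonneg hτ.1.le ρ; linarith
        have h2 : x ^ ρ ≤ (max 1 x) ^ ρ :=
          Real.rpow_le_rpow hx.le (le_max_right _ _) (by linarith [hρ.1])
        have h3 : (max 1 x) ^ ρ ≤ D :=
          Real.rpow_le_rpow_of_exponent_le (le_max_left _ _) hρ.2.le
        linarith
      calc (x ^ ρ - τ ^ ρ) ^ (α - 1) ≤ D ^ (α - 1) :=
            Real.rpow_le_rpow hsub.le hxρD (by linarith)
        _ ≤ C := le_max_left _ _
    · have hβeq : β = α - 1 := min_eq_left (by linarith)
      rw [hβeq]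
      have hpos : (0:ℝ) < c0 / 2 * (x - τ) :=
        mul_pos (half_pos hc0) (by linarith [hτ.2])
      calc (x ^ ρ - τ ^ ρ) ^ (α - 1) ≤ (c0 / 2 * (x - τ)) ^ (α - 1) :=
            Real.rpow_le_rpow_of_nonpos hpos hlow (by linarith)
        _ = (c0/2) ^ (α - 1) * (x - τ) ^ (α - 1) :=
            Real.mul_rpow (by positivity) (by linarith [hτ.2])
        _ ≤ C * (x - τ) ^ (α - 1) := by
            apply mul_le_mul_of_nonneg_right (le_max_right _ _)
            exact Real.rpow_nonneg (by linarith [hτ.2]) _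
  -- bound function
  set bound : ℝ → ℝ := fun τ => (1 + x) * C * M * (τ ^ (-(1/2) : ℝ) * (x - τ) ^ β)
    with hbounddef
  -- integrability of the bound
  have hboundInt : IntervalIntegrable bound volume a x := by
    have hg : IntervalIntegrable (fun τ : ℝ => τ ^ (-(1/2) : ℝ) * (x - τ) ^ β) volume a x := by
      set m := (a + x) / 2 with hmdef
      have ham : a < m := by rw [hmdef]; linarith
      have hmx : m < x := by rw [hmdef]; linarith
      have hm0 : 0 < m := lt_of_le_of_lt ha ham
      have hmeas : Measurable (fun τ : ℝ => τ ^ (-(1/2) : ℝ) * (x - τ) ^ β) := by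
        fun_prop
      have h1 : IntervalIntegrable (fun τ : ℝ => τ ^ (-(1/2) : ℝ) * (x - τ) ^ β) volume a m := by
        rw [intervalIntegrable_iff, Set.uIoc_of_le ham.le]
        have hGint : IntegrableOn (fun τ : ℝ => (x - m) ^ β * τ ^ (-(1/2) : ℝ))
            (Set.Ioc a m) volume := by
          have := (intervalIntegral.intervalIntegrable_rpow' (a := a) (b := m) (r := (-(1/2) : ℝ)) (by norm_num))
          rw [intervalIntegrable_iff, Set.uIoc_of_le ham.le] at this
          exact this.const_mul _
        refine Integrable.mono' hGint hmeas.aestronglyMeasurable ?_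
        rw [ae_restrict_iff' measurableSet_Ioc]
        refine Filter.Eventually.of_forall (fun τ hτ => ?_)
        have hτ0 : 0 < τ := lt_of_le_of_lt ha hτ.1
        have hxτ : 0 < x - m := by linarith
        have hb1 : (x - τ) ^ β ≤ (x - m) ^ β :=
          Real.rpow_le_rpow_of_nonpos hxτ (by linarith [hτ.2]) hβ0
        rw [Real.norm_eq_abs, abs_mul, abs_of_nonneg (Real.rpow_nonneg hτ0.le _),
          abs_of_nonneg (Real.rpow_nonneg (by linarith [hτ.2, hmx]) _)]
        rw [mul_comm ((x - m) ^ β)]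
        exact mul_le_mul_of_nonneg_left hb1 (Real.rpow_nonneg hτ0.le _)
      have h2 : IntervalIntegrable (fun τ : ℝ => τ ^ (-(1/2) : ℝ) * (x - τ) ^ β) volume m x := by
        rw [intervalIntegrable_iff, Set.uIoc_of_le hmx.le]
        have hGint : IntegrableOn (fun τ : ℝ => m ^ (-(1/2) : ℝ) * (x - τ) ^ β)
            (Set.Ioc m x) volume := by
          have h0 : IntervalIntegrable (fun t : ℝ => t ^ β) volume 0 (x - m) :=
            intervalIntegral.intervalIntegrable_rpow' hβ1
          have h0' := (h0.comp_sub_left x).symm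
          simp only [sub_zero, sub_sub_cancel] at h0'
          rw [intervalIntegrable_iff, Set.uIoc_of_le hmx.le] at h0'
          exact h0'.const_mul _
        refine Integrable.mono' hGint hmeas.aestronglyMeasurable ?_
        rw [ae_restrict_iff' measurableSet_Ioc]
        refine Filter.Eventually.of_forall (fun τ hτ => ?_)
        have hτ0 : 0 < τ := lt_of_lt_of_le hm0 hτ.1.le
        have hb1 : τ ^ (-(1/2) : ℝ) ≤ m ^ (-(1/2) : ℝ) :=
          Real.rpow_le_rpow_of_nonpos hm0 hτ.1.le (by norm_num)
        rw [Real.norm_eq_abs, abs_mul, abs_of_nonneg (Real.rpow_nonneg hτ0.le _),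
          abs_of_nonneg (Real.rpow_nonneg (by linarith [hτ.2]) _)]
        exact mul_le_mul_of_nonneg_right hb1 (Real.rpow_nonneg (by linarith [hτ.2]) _)
      exact h1.trans h2
    have := hg.const_mul ((1 + x) * C * M)
    simpa [hbounddef, mul_assoc] using this
  -- a.e. τ ≠ x
  have hae : ∀ᵐ τ : ℝ, τ ≠ x := by
    rw [ae_iff]
    simp only [not_not]
    rw [show {τ : ℝ | τ = x} = {x} from rfl]
    exact measure_singleton x
  -- the integral tendsto
  have hInt : Tendsto
      (fun ρ : ℝ => ∫ τ in a..x, τ ^ (ρ - 1) * (x ^ ρ - τ ^ ρ) ^ (α - 1) * f τ)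
      (nhds 1)
      (nhds (∫ τ in a..x, (x - τ) ^ (α - 1) * f τ)) := by
    apply intervalIntegral.tendsto_integral_filter_of_dominated_convergence bound
    · -- measurability
      refine Filter.eventually_of_mem
        (Ioo_mem_nhds (by norm_num : (1/2:ℝ) < 1) (by norm_num : (1:ℝ) < 3/2)) (fun ρ hρ => ?_)
      rw [Set.uIoc_of_le hax.le, ← Measure.restrict_congr_set Ioo_ae_eq_Ioc]
      have hcont : ContinuousOn
          (fun τ : ℝ => τ ^ (ρ - 1) * (x ^ ρ - τ ^ ρ) ^ (α - 1) * f τ) (Set.Ioo a x) := by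
        apply ContinuousOn.mul
        · apply ContinuousOn.mul
          · exact continuousOn_id.rpow_const (fun τ hτ =>
              Or.inl (ne_of_gt (lt_of_le_of_lt ha hτ.1)))
          · apply ContinuousOn.rpow_const
            · exact (continuousOn_const.sub (continuousOn_id.rpow_const
                (fun τ hτ => Or.inl (ne_of_gt (lt_of_le_of_lt ha hτ.1)))))
            · intro τ hτ
              left
              have hτ0 : 0 < τ := lt_of_le_of_lt ha hτ.1
              exact ne_of_gt (sub_pos.mpr (Real.rpow_lt_rpow hτ0.le hτ.2 (by linarith [hρ.1])))
        · exact hf.mono (fun τ hτ => ⟨le_of_lt (lt_of_le_of_lt (le_refl a) hτ.1), hτ.2.le⟩)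
      exact hcont.aestronglyMeasurable measurableSet_Ioo
    · -- bound
      refine Filter.eventually_of_mem (Ioo_mem_nhds (by norm_num : (1/2:ℝ) < 1) (by norm_num : (1:ℝ) < 3/2)) ?_
      intro ρ hρ
      filter_upwards [hae] with τ hτne hτmem
      rw [Set.uIoc_of_le hax.le] at hτmem
      have hτx : τ < x := lt_of_le_of_ne hτmem.2 hτne
      have hτ0 : 0 < τ := lt_of_le_of_lt ha hτmem.1
      have hlow := gfi_aux_lower x hx hρ.1.le hρ.2.le hτ0 hτx
      have hsub : (0:ℝ) < x ^ ρ - τ ^ ρ :=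
        lt_of_lt_of_le (mul_pos (half_pos hc0) (by linarith)) hlow
      -- bound each factor
      have hA : τ ^ (ρ - 1) ≤ (1 + x) * τ ^ (-(1/2) : ℝ) := by
        have heq : τ ^ (ρ - 1) = τ ^ (-(1/2) : ℝ) * τ ^ (ρ - 1/2) := by
          rw [← Real.rpow_add hτ0]; ring_nf
        rw [heq, mul_comm]
        apply mul_le_mul_of_nonneg_right _ (Real.rpow_nonneg hτ0.le _)
        rcases le_total τ 1 with hτ1 | hτ1
        · have := Real.rpow_le_one hτ0.le hτ1 (by linarith [hρ.1] : (0:ℝ) ≤ ρ - 1/2)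
          linarith
        · have h1 : τ ^ (ρ - 1/2) ≤ τ ^ (1:ℝ) :=
            Real.rpow_le_rpow_of_exponent_le hτ1 (by linarith [hρ.2])
          rw [Real.rpow_one] at h1
          linarith
      have hB := hupper ρ hρ τ ⟨hτ0, hτx⟩
      have hfM : |f τ| ≤ M := hM τ ⟨hτmem.1.le, hτx.le⟩
      rw [Real.norm_eq_abs, abs_mul, abs_mul,
        abs_of_nonneg (Real.rpow_nonneg hτ0.le _), abs_of_nonneg (Real.rpow_nonneg hsub.le _)]
      calc τ ^ (ρ - 1) * (x ^ ρ - τ ^ ρ) ^ (α - 1) * |f τ|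
          ≤ ((1 + x) * τ ^ (-(1/2) : ℝ)) * (C * (x - τ) ^ β) * M := by
            apply mul_le_mul _ hfM (abs_nonneg _)
            · apply mul_nonneg (mul_nonneg (by linarith) (Real.rpow_nonneg hτ0.le _))
              exact mul_nonneg hC0 (Real.rpow_nonneg (by linarith) _)
            · apply mul_le_mul hA hB (Real.rpow_nonneg hsub.le _)
              exact mul_nonneg (by linarith) (Real.rpow_nonneg hτ0.le _)
        _ = bound τ := by rw [hbounddef]; ring
    · exact hboundInt
    · -- pointwise limit
      filter_upwards [hae] with τ hτne hτmem
      rw [Set.uIoc_of_le hax.le] at hτmem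
      have hτx : τ < x := lt_of_le_of_ne hτmem.2 hτne
      have hτ0 : 0 < τ := lt_of_le_of_lt ha hτmem.1
      have hid : Tendsto (fun ρ : ℝ => ρ) (nhds 1) (nhds 1) := tendsto_id
      have hsub1 : Tendsto (fun ρ : ℝ => ρ - 1) (nhds 1) (nhds 0) := by
        have : Tendsto (fun ρ : ℝ => ρ - 1) (nhds 1) (nhds (1 - 1)) :=
          ((continuous_id (X := ℝ)).sub (continuous_const (y := (1:ℝ)))).tendsto 1
        simpa using this
      have t1 : Tendsto (fun ρ : ℝ => τ ^ (ρ - 1)) (nhds 1) (nhds 1) := by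
        have hc : Tendsto (fun _ : ℝ => τ) (nhds 1) (nhds τ) := tendsto_const_nhds
        have := hc.rpow hsub1 (Or.inl hτ0.ne')
        simpa using this
      have t2 : Tendsto (fun ρ : ℝ => x ^ ρ - τ ^ ρ) (nhds 1) (nhds (x - τ)) := by
        have hcx : Tendsto (fun _ : ℝ => x) (nhds 1) (nhds x) := tendsto_const_nhds
        have hcτ : Tendsto (fun _ : ℝ => τ) (nhds 1) (nhds τ) := tendsto_const_nhds
        have hx2 := hcx.rpow hid (Or.inl hx.ne')
        have hτ2 := hcτ.rpow hid (Or.inl hτ0.ne')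
        rw [Real.rpow_one] at hx2 hτ2
        exact hx2.sub hτ2
      have t3 : Tendsto (fun ρ : ℝ => (x ^ ρ - τ ^ ρ) ^ (α - 1)) (nhds 1)
          (nhds ((x - τ) ^ (α - 1))) :=
        t2.rpow_const (Or.inl (sub_ne_zero_of_ne hτx.ne'))
      have := (t1.mul t3).mul_const (f τ)
      simpa using this
  -- prefactor tendsto
  have hPre : Tendsto (fun ρ : ℝ => ρ ^ (1 - α) / Real.Gamma α) (nhds 1)
      (nhds (1 / Real.Gamma α)) := by
    have hid : Tendsto (fun ρ : ℝ => ρ) (nhds 1) (nhds 1) := tendsto_id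
    have := (hid.rpow_const (p := 1 - α) (Or.inl one_ne_zero)).div_const (Real.Gamma α)
    simpa using this
  exact hPre.mul hInt
end

section
/- Let α > 0, 0 < a < x be real numbers and let f : ℝ → ℝ be continuous on [a, x]. Then the limit as ρ → 0⁺ (the limit from the right at 0) of the generalized fractional integral (ρI^α_{a+} f)(x) equals the Hadamard fractional integral (1/Γ(α)) · ∫_a^x (log(x/τ))^(α−1) f(τ) (dτ/τ). -/
open MeasureTheory Real Filter

lemma aux_rpow_Icc (s ρ : ℝ) (hs : 0 < s) (hρ0 : 0 < ρ) (hρ1 : ρ ≤ 1) :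
    min s 1 ≤ s ^ ρ ∧ s ^ ρ ≤ max s 1 := by
  rcases le_total s 1 with h | h
  · constructor
    · calc min s 1 = s := min_eq_left h
        _ = s ^ (1:ℝ) := (Real.rpow_one s).symm
        _ ≤ s ^ ρ := Real.rpow_le_rpow_of_exponent_ge hs h hρ1
    · calc s ^ ρ ≤ s ^ (0:ℝ) := Real.rpow_le_rpow_of_exponent_ge hs h hρ0.le
        _ = 1 := Real.rpow_zero s
        _ = max s 1 := (max_eq_right h).symm
  · constructor
    · calc min s 1 = 1 := min_eq_right h
        _ = s ^ (0:ℝ) := (Real.rpow_zero s).symm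
        _ ≤ s ^ ρ := Real.rpow_le_rpow_of_exponent_le h hρ0.le
    · calc s ^ ρ ≤ s ^ (1:ℝ) := Real.rpow_le_rpow_of_exponent_le h hρ1
        _ = s := Real.rpow_one s
        _ = max s 1 := (max_eq_left h).symm

lemma aux_u_sandwich (a x τ ρ : ℝ) (ha : 0 < a) (hτ : a ≤ τ) (hτx : τ ≤ x) (hρ0 : 0 < ρ)
    (hρ1 : ρ ≤ 1) :
    (min a 1 / x) * (x - τ) ≤ (x ^ ρ - τ ^ ρ) / ρ ∧
      (x ^ ρ - τ ^ ρ) / ρ ≤ (max x 1 / a) * (x - τ) := by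
  have hτ0 : 0 < τ := ha.trans_le hτ
  have hx0 : 0 < x := hτ0.trans_le hτx
  have hint : ∫ s in τ..x, s ^ (ρ - 1) = (x ^ ρ - τ ^ ρ) / ρ := by
    rw [integral_rpow (Or.inl (by linarith))]
    norm_num
  have hci : ∀ c : ℝ, ∫ _ in τ..x, c = c * (x - τ) := by
    intro c; rw [intervalIntegral.integral_const]; ring_nf
  have hcont : ContinuousOn (fun s : ℝ => s ^ (ρ - 1)) (Set.uIcc τ x) := by
    intro s hs
    rw [Set.uIcc_of_le hτx] at hs
    exact (Real.continuousAt_rpow_const s _ (Or.inl (hτ0.trans_le hs.1).ne')).continuousWithinAt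
  have hii : IntervalIntegrable (fun s : ℝ => s ^ (ρ - 1)) volume τ x :=
    hcont.intervalIntegrable
  have key : ∀ s ∈ Set.Icc τ x, (min a 1 / x) ≤ s ^ (ρ - 1) ∧ s ^ (ρ - 1) ≤ (max x 1 / a) := by
    intro s hs
    have hs0 : 0 < s := hτ0.trans_le hs.1
    have hsρ := aux_rpow_Icc s ρ hs0 hρ0 hρ1
    have hrw : s ^ (ρ - 1) = s ^ ρ / s := by
      rw [Real.rpow_sub hs0, Real.rpow_one]
    rw [hrw]
    constructor
    · have h1 : min a 1 ≤ s ^ ρ := le_trans (min_le_min (hτ.trans hs.1) le_rfl) hsρ.1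
      have h2 : s ≤ x := hs.2
      exact div_le_div₀ (Real.rpow_nonneg hs0.le ρ) h1 hs0 h2
    · have h1 : s ^ ρ ≤ max x 1 := hsρ.2.trans (max_le_max hs.2 le_rfl)
      have h2 : a ≤ s := hτ.trans hs.1
      exact div_le_div₀ (le_trans zero_le_one (le_max_right x 1)) h1 ha h2
  constructor
  · rw [← hint, ← hci (min a 1 / x)]
    exact intervalIntegral.integral_mono_on hτx (intervalIntegrable_const) hii
      (fun s hs => (key s hs).1)
  · rw [← hint, ← hci (max x 1 / a)]
    exact intervalIntegral.integral_mono_on hτx hii (intervalIntegrable_const)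
      (fun s hs => (key s hs).2)

lemma aux_rpow_bound (d1 d2 t u p : ℝ) (hd1 : 0 < d1) (ht : 0 < t)
    (h1 : d1 * t ≤ u) (h2 : u ≤ d2 * t) :
    u ^ p ≤ max (d1 ^ p) (d2 ^ p) * t ^ p := by
  have hu0 : 0 < u := lt_of_lt_of_le (mul_pos hd1 ht) h1
  have hd2 : 0 < d2 := by
    by_contra h
    push_neg at h
    nlinarith
  rcases le_or_gt 0 p with hp | hp
  · calc u ^ p ≤ (d2 * t) ^ p := Real.rpow_le_rpow hu0.le h2 hp
      _ = d2 ^ p * t ^ p := Real.mul_rpow hd2.le ht.le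
      _ ≤ max (d1 ^ p) (d2 ^ p) * t ^ p := by
        gcongr ?_ * ?_
        · exact le_max_right _ _
  · calc u ^ p ≤ (d1 * t) ^ p := Real.rpow_le_rpow_of_nonpos (mul_pos hd1 ht) h1 hp.le
      _ = d1 ^ p * t ^ p := Real.mul_rpow hd1.le ht.le
      _ ≤ max (d1 ^ p) (d2 ^ p) * t ^ p := by
        gcongr ?_ * ?_
        · exact le_max_left _ _

lemma aux_tendsto_u (x τ : ℝ) (hx : 0 < x) (hτ : 0 < τ) :
    Tendsto (fun ρ : ℝ => (x ^ ρ - τ ^ ρ) / ρ) (nhdsWithin 0 (Set.Ioi 0))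
      (nhds (Real.log x - Real.log τ)) := by
  have hd : HasDerivAt (fun ρ : ℝ => Real.exp (ρ * Real.log x) - Real.exp (ρ * Real.log τ))
      (Real.log x - Real.log τ) 0 := by
    have h1 : HasDerivAt (fun ρ : ℝ => ρ * Real.log x) (Real.log x) 0 :=
      hasDerivAt_mul_const _
    have h2 : HasDerivAt (fun ρ : ℝ => ρ * Real.log τ) (Real.log τ) 0 :=
      hasDerivAt_mul_const _
    have := (h1.exp).sub (h2.exp)
    simp only [zero_mul, Real.exp_zero, one_mul] at this
    exact this
  have := hasDerivAt_iff_tendsto_slope.mp hd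
  have h2 : Tendsto (slope (fun ρ : ℝ => Real.exp (ρ * Real.log x) - Real.exp (ρ * Real.log τ)) 0)
      (nhdsWithin 0 (Set.Ioi 0)) (nhds (Real.log x - Real.log τ)) :=
    this.mono_left (nhdsWithin_mono 0 (fun y hy => ne_of_gt hy))
  refine h2.congr (fun ρ => ?_)
  have hs : slope (fun ρ : ℝ => Real.exp (ρ * Real.log x) - Real.exp (ρ * Real.log τ)) 0 ρ
      = (Real.exp (ρ * Real.log x) - Real.exp (ρ * Real.log τ)) / ρ := by
    simp [slope_def_field]
  rw [hs, Real.rpow_def_of_pos hx, Real.rpow_def_of_pos hτ]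
  ring_nf

/-- For α > 0, 0 < a < x and f continuous on [a, x], the limit as ρ → 0⁺ of the
generalized fractional integral (ρI^α_{a+} f)(x) equals the Hadamard fractional integral
(1/Γ(α)) · ∫_a^x (log(x/τ))^(α−1) f(τ) dτ/τ. -/
theorem generalized_fractional_integral_tendsto_hadamard
    (α a x : ℝ) (hα : 0 < α) (ha : 0 < a) (hax : a < x)
    (f : ℝ → ℝ) (hf : ContinuousOn f (Set.Icc a x)) :
    Tendsto
      (fun ρ : ℝ => (ρ ^ (1 - α) / Real.Gamma α) *
        ∫ τ in a..x, τ ^ (ρ - 1) * (x ^ ρ - τ ^ ρ) ^ (α - 1) * f τ)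
      (nhdsWithin 0 (Set.Ioi 0))
      (nhds ((1 / Real.Gamma α) * ∫ τ in a..x, (Real.log (x / τ)) ^ (α - 1) * f τ / τ)) := by
  have hx0 : 0 < x := ha.trans hax
  obtain ⟨M, hM⟩ := isCompact_Icc.exists_bound_of_continuousOn hf
  set d1 : ℝ := min a 1 / x with hd1def
  set d2 : ℝ := max x 1 / a with hd2def
  have hd1 : 0 < d1 := div_pos (lt_min ha one_pos) hx0
  have hd2 : 0 < d2 := div_pos (lt_of_lt_of_le one_pos (le_max_right x 1)) ha
  have hM0 : 0 ≤ M := le_trans (norm_nonneg _) (hM a (Set.left_mem_Icc.2 hax.le))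
  set D : ℝ := max (d1 ^ (α - 1)) (d2 ^ (α - 1)) with hDdef
  have hD0 : 0 ≤ D := le_trans (Real.rpow_nonneg hd1.le _) (le_max_left _ _)
  set K : ℝ := d2 * D * M with hKdef
  set F : ℝ → ℝ → ℝ := fun ρ τ => τ ^ (ρ - 1) * ((x ^ ρ - τ ^ ρ) / ρ) ^ (α - 1) * f τ with hFdef
  have hIoc : Set.uIoc a x = Set.Ioc a x := Set.uIoc_of_le hax.le
  have hane : ∀ᵐ τ : ℝ ∂volume, τ ≠ x := by
    rw [ae_iff]
    simp only [not_not, Set.setOf_eq_eq_singleton]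
    exact measure_singleton x
  have hmain : Tendsto (fun ρ => ∫ τ in a..x, F ρ τ) (nhdsWithin 0 (Set.Ioi 0))
      (nhds (∫ τ in a..x, (Real.log (x / τ)) ^ (α - 1) * f τ / τ)) := by
    apply intervalIntegral.tendsto_integral_filter_of_dominated_convergence
      (bound := fun τ => K * (x - τ) ^ (α - 1))
    · -- measurability
      filter_upwards [Ioc_mem_nhdsGT (zero_lt_one)] with ρ hρ
      rw [hIoc, ← Measure.restrict_congr_set MeasureTheory.Ioo_ae_eq_Ioc]
      refine ContinuousOn.aestronglyMeasurable ?_ measurableSet_Ioo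
      intro τ hτmem
      have hτ0 : 0 < τ := ha.trans hτmem.1
      have hu0 : 0 < (x ^ ρ - τ ^ ρ) / ρ :=
        div_pos (sub_pos.2 (Real.rpow_lt_rpow hτ0.le hτmem.2 hρ.1)) hρ.1
      have hbase : ContinuousAt (fun τ : ℝ => (x ^ ρ - τ ^ ρ) / ρ) τ :=
        (continuousAt_const.sub (Real.continuousAt_rpow_const τ ρ (Or.inl hτ0.ne'))).div_const ρ
      refine ContinuousWithinAt.mul (ContinuousWithinAt.mul ?_ ?_) ?_
      · exact (Real.continuousAt_rpow_const τ (ρ - 1) (Or.inl hτ0.ne')).continuousWithinAt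
      · exact (hbase.rpow_const (Or.inl hu0.ne')).continuousWithinAt
      · exact (hf.mono (Set.Ioo_subset_Icc_self)) τ hτmem |> id
    · -- bound
      filter_upwards [Ioc_mem_nhdsGT (zero_lt_one)] with ρ hρ
      filter_upwards [hane] with τ hτne hτmem
      rw [hIoc] at hτmem
      have hτ0 : 0 < τ := ha.trans hτmem.1
      have hτx : τ < x := lt_of_le_of_ne hτmem.2 hτne
      have ht0 : 0 < x - τ := sub_pos.2 hτx
      obtain ⟨hs1, hs2⟩ := aux_u_sandwich a x τ ρ ha hτmem.1.le hτmem.2 hρ.1 hρ.2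
      have hu0 : 0 ≤ (x ^ ρ - τ ^ ρ) / ρ := le_trans (by positivity) hs1
      have h1 : τ ^ (ρ - 1) ≤ d2 := by
        rw [Real.rpow_sub hτ0, Real.rpow_one, hd2def]
        exact div_le_div₀ (le_trans zero_le_one (le_max_right x 1))
          ((aux_rpow_Icc τ ρ hτ0 hρ.1 hρ.2).2.trans (max_le_max hτmem.2 le_rfl)) ha hτmem.1.le
      have h2 : ((x ^ ρ - τ ^ ρ) / ρ) ^ (α - 1) ≤ D * (x - τ) ^ (α - 1) :=
        aux_rpow_bound d1 d2 (x - τ) _ (α - 1) hd1 ht0 hs1 hs2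
      have h3 : |f τ| ≤ M := hM τ (Set.mem_Icc.2 ⟨hτmem.1.le, hτmem.2⟩)
      have hnorm : ‖F ρ τ‖ = τ ^ (ρ - 1) * ((x ^ ρ - τ ^ ρ) / ρ) ^ (α - 1) * |f τ| := by
        rw [hFdef]
        simp only [Real.norm_eq_abs, abs_mul]
        rw [abs_of_nonneg (Real.rpow_nonneg hτ0.le _), abs_of_nonneg (Real.rpow_nonneg hu0 _)]
      rw [hnorm, hKdef]
      calc τ ^ (ρ - 1) * ((x ^ ρ - τ ^ ρ) / ρ) ^ (α - 1) * |f τ|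
          ≤ d2 * (D * (x - τ) ^ (α - 1)) * M := by
            apply mul_le_mul (mul_le_mul h1 h2 (Real.rpow_nonneg hu0 _) hd2.le) h3
              (abs_nonneg _)
            positivity
        _ = d2 * D * M * (x - τ) ^ (α - 1) := by ring
    · -- bound integrable
      have h0 : IntervalIntegrable (fun t : ℝ => t ^ (α - 1)) volume 0 (x - a) :=
        intervalIntegral.intervalIntegrable_rpow' (by linarith)
      have h1 := h0.comp_sub_left x
      simp only [sub_zero, sub_sub_cancel] at h1
      exact (h1.symm.const_mul K)
    · -- pointwise limit
      filter_upwards [hane] with τ hτne hτmem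
      rw [hIoc] at hτmem
      have hτ0 : 0 < τ := ha.trans hτmem.1
      have hτx : τ < x := lt_of_le_of_ne hτmem.2 hτne
      have hL : 0 < Real.log (x / τ) := Real.log_pos ((one_lt_div hτ0).2 hτx)
      have hA : Tendsto (fun ρ : ℝ => τ ^ (ρ - 1)) (nhdsWithin 0 (Set.Ioi 0)) (nhds τ⁻¹) := by
        have hc : Continuous (fun ρ : ℝ => Real.exp ((ρ - 1) * Real.log τ)) :=
          Real.continuous_exp.comp ((continuous_id.sub continuous_const).mul continuous_const)
        have h1 : Tendsto (fun ρ : ℝ => Real.exp ((ρ - 1) * Real.log τ))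
            (nhdsWithin 0 (Set.Ioi 0)) (nhds (Real.exp ((0 - 1) * Real.log τ))) :=
          (hc.tendsto 0).mono_left nhdsWithin_le_nhds
        have h2 : Real.exp ((0 - 1) * Real.log τ) = τ⁻¹ := by
          rw [zero_sub, neg_one_mul, Real.exp_neg, Real.exp_log hτ0]
        rw [h2] at h1
        refine h1.congr fun ρ => ?_
        rw [Real.rpow_def_of_pos hτ0]
        ring_nf
      have hB : Tendsto (fun ρ : ℝ => (x ^ ρ - τ ^ ρ) / ρ) (nhdsWithin 0 (Set.Ioi 0))
          (nhds (Real.log (x / τ))) := by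
        have := aux_tendsto_u x τ hx0 hτ0
        rwa [← Real.log_div hx0.ne' hτ0.ne'] at this
      have hC := hB.rpow_const (p := α - 1) (Or.inl hL.ne')
      have hcomb := (hA.mul hC).mul_const (f τ)
      have heq : τ⁻¹ * Real.log (x / τ) ^ (α - 1) * f τ
          = Real.log (x / τ) ^ (α - 1) * f τ / τ := by ring
      rw [heq] at hcomb
      exact hcomb
  -- transfer to the original expression
  have hfinal := hmain.const_mul (1 / Real.Gamma α)
  refine Tendsto.congr' ?_ hfinal
  filter_upwards [self_mem_nhdsWithin] with ρ hρ
  have hρ0 : 0 < ρ := hρ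
  have hcong : ∫ τ in a..x, F ρ τ
      = ∫ τ in a..x, ρ ^ (1 - α) * (τ ^ (ρ - 1) * (x ^ ρ - τ ^ ρ) ^ (α - 1) * f τ) := by
    refine intervalIntegral.integral_congr fun τ hτ => ?_
    rw [Set.uIcc_of_le hax.le] at hτ
    have hτ0 : 0 < τ := ha.trans_le hτ.1
    have hw : 0 ≤ x ^ ρ - τ ^ ρ := sub_nonneg.2 (Real.rpow_le_rpow hτ0.le hτ.2 hρ0.le)
    have hkey : ((x ^ ρ - τ ^ ρ) / ρ) ^ (α - 1) = ρ ^ (1 - α) * (x ^ ρ - τ ^ ρ) ^ (α - 1) := by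
      rw [div_eq_mul_inv, Real.mul_rpow hw (inv_nonneg.2 hρ0.le),
        Real.inv_rpow hρ0.le, ← Real.rpow_neg hρ0.le, neg_sub]
      ring
    rw [hFdef]
    simp only []
    rw [hkey]
    ring
  rw [hcong, intervalIntegral.integral_const_mul]
  ring
end

section
/- Let 0 < α < 1, ρ > 0, 0 < a < x be real numbers and let f : ℝ → ℝ be continuous on [a, x]. Then (ρI^(1−α)_{a+} (ρI^α_{a+} f))(x) = ∫_a^x s^(ρ−1) f(s) ds; that is, applying the generalized fractional integral of order 1−α to the generalized fractional integral of order α of f yields the weighted antiderivative ∫_a^x s^(ρ−1) f(s) ds. -/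
open MeasureTheory Real

/-- The generalized (left-sided) fractional integral
(ρI^α_{a+} f)(x) = (ρ^(1−α)/Γ(α)) · ∫_a^x τ^(ρ−1) (x^ρ − τ^ρ)^(α−1) f(τ) dτ. -/
noncomputable def genFracIntegral (ρ α a : ℝ) (f : ℝ → ℝ) (x : ℝ) : ℝ :=
  (ρ ^ (1 - α) / Real.Gamma α) * ∫ τ in a..x, τ ^ (ρ - 1) * (x ^ ρ - τ ^ ρ) ^ (α - 1) * f τ

section Aux

open Set

/-! ### The Beta integral on `(0,1)` -/

lemma beta01_aux {α : ℝ} :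
    (fun t : ℝ => (t:ℂ) ^ ((α:ℂ) - 1) * (1 - (t:ℂ)) ^ ((1:ℂ) - (α:ℂ) - 1))
      =ᵐ[volume.restrict (Ioc (0:ℝ) 1)]
    (fun t : ℝ => ((t ^ (α - 1) * (1 - t) ^ (-α) : ℝ) : ℂ)) := by
  filter_upwards [ae_restrict_mem measurableSet_Ioc] with t ht
  rw [show ((1:ℂ) - α - 1) = ((-α : ℝ) : ℂ) by push_cast; ring,
    show ((α:ℂ) - 1) = ((α - 1 : ℝ) : ℂ) by push_cast; ring]
  rw [← Complex.ofReal_cpow ht.1.le, ← Complex.ofReal_one, ← Complex.ofReal_sub,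
    ← Complex.ofReal_cpow (by linarith [ht.2] : (0:ℝ) ≤ 1 - t)]
  push_cast; ring

lemma beta01_integrable {α : ℝ} (h0 : 0 < α) (h1 : α < 1) :
    IntegrableOn (fun t : ℝ => t ^ (α - 1) * (1 - t) ^ (-α)) (Ioc (0:ℝ) 1) := by
  have hc : IntervalIntegrable
      (fun t : ℝ => (t:ℂ) ^ ((α:ℂ) - 1) * (1 - (t:ℂ)) ^ ((1:ℂ) - (α:ℂ) - 1)) volume 0 1 :=
    Complex.betaIntegral_convergent (by simpa using h0)
      (by simp [Complex.sub_re]; linarith)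
  rw [intervalIntegrable_iff_integrableOn_Ioc_of_le zero_le_one] at hc
  have h2 := (hc.congr beta01_aux).re
  refine h2.congr (Filter.Eventually.of_forall fun t => ?_)
  simp

lemma beta01_integral {α : ℝ} (h0 : 0 < α) (h1 : α < 1) :
    ∫ t in Ioc (0:ℝ) 1, t ^ (α - 1) * (1 - t) ^ (-α) = Real.Gamma α * Real.Gamma (1 - α) := by
  have key := Complex.Gamma_mul_Gamma_eq_betaIntegral (s := (α:ℂ)) (t := 1 - (α:ℂ))
    (by simpa using h0) (by simp [Complex.sub_re]; linarith)
  rw [show (α:ℂ) + (1 - α) = 1 by ring, Complex.Gamma_one, one_mul] at key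
  unfold Complex.betaIntegral at key
  rw [intervalIntegral.integral_of_le zero_le_one,
    integral_congr_ae beta01_aux] at key
  rw [show (∫ a in Ioc (0:ℝ) 1, ((a ^ (α - 1) * (1 - a) ^ (-α) : ℝ) : ℂ))
      = ((∫ a in Ioc (0:ℝ) 1, a ^ (α - 1) * (1 - a) ^ (-α) : ℝ) : ℂ) from integral_ofReal] at key
  have h2 : Complex.Gamma (α:ℂ) * Complex.Gamma (1 - α) =
      ((Real.Gamma α * Real.Gamma (1 - α) : ℝ) : ℂ) := by
    rw [show ((1:ℂ) - α) = ((1 - α : ℝ) : ℂ) by push_cast; ring, Complex.Gamma_ofReal,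
      Complex.Gamma_ofReal]
    push_cast; ring
  rw [h2] at key
  exact_mod_cast key.symm

/-! ### The Beta integral on `(c,d)` -/

lemma affine_kernel_eq {α c d : ℝ} (hcd : c < d) {t : ℝ} (ht : t ∈ Ioo (0:ℝ) 1) :
    |d - c| • (((d - c) * t + c - c) ^ (α - 1) * (d - ((d - c) * t + c)) ^ (-α))
      = t ^ (α - 1) * (1 - t) ^ (-α) := by
  have hdc : (0:ℝ) < d - c := by linarith
  have h2 : d - ((d - c) * t + c) = (d - c) * (1 - t) := by ring
  rw [smul_eq_mul, abs_of_pos hdc, show (d - c) * t + c - c = (d - c) * t by ring, h2,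
    Real.mul_rpow hdc.le ht.1.le, Real.mul_rpow hdc.le (by linarith [ht.2] : (0:ℝ) ≤ 1 - t)]
  rw [show (d-c) * ((d-c)^(α-1) * t^(α-1) * ((d-c)^(-α) * (1-t)^(-α)))
      = ((d-c)^(1:ℝ) * (d-c)^(α-1) * (d-c)^(-α)) * (t^(α-1) * (1-t)^(-α)) by
    rw [Real.rpow_one]; ring]
  rw [← Real.rpow_add hdc, ← Real.rpow_add hdc, show (1:ℝ) + (α-1) + -α = 0 by ring,
    Real.rpow_zero, one_mul]

lemma affine_deriv {c d : ℝ} : ∀ t ∈ Ioo (0:ℝ) 1,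
    HasDerivWithinAt (fun t : ℝ => (d - c) * t + c) (d - c) (Ioo (0:ℝ) 1) t := by
  intro t _
  simpa using (((hasDerivAt_id t).const_mul (d - c)).add_const c).hasDerivWithinAt

lemma affine_inj {c d : ℝ} (hcd : c < d) : InjOn (fun t : ℝ => (d - c) * t + c) (Ioo 0 1) :=
  fun t1 _ t2 _ h => by
    have hne : d - c ≠ 0 := by intro h'; rw [h'] at h; linarith
    simp only [add_left_inj] at h
    exact mul_left_cancel₀ hne h

lemma affine_image {c d : ℝ} (hcd : c < d) :
    (fun t : ℝ => (d - c) * t + c) '' Ioo 0 1 = Ioo c d := by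
  rw [image_affine_Ioo (by linarith : (0:ℝ) < d - c)]
  norm_num

lemma betaCD_integrable {α : ℝ} (h0 : 0 < α) (h1 : α < 1) {c d : ℝ} (hcd : c < d) :
    IntegrableOn (fun u : ℝ => (u - c) ^ (α - 1) * (d - u) ^ (-α)) (Ioo c d) := by
  rw [← affine_image hcd, MeasureTheory.integrableOn_image_iff_integrableOn_abs_deriv_smul
    measurableSet_Ioo affine_deriv (affine_inj hcd)]
  have hbeta : IntegrableOn (fun t : ℝ => t ^ (α - 1) * (1 - t) ^ (-α)) (Ioo (0:ℝ) 1) :=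
    (beta01_integrable h0 h1).mono_set Ioo_subset_Ioc_self
  exact hbeta.congr_fun (fun t ht => (affine_kernel_eq hcd ht).symm) measurableSet_Ioo

lemma betaCD_integral {α : ℝ} (h0 : 0 < α) (h1 : α < 1) {c d : ℝ} (hcd : c < d) :
    ∫ u in Ioo c d, (u - c) ^ (α - 1) * (d - u) ^ (-α)
      = Real.Gamma α * Real.Gamma (1 - α) := by
  rw [← affine_image hcd, MeasureTheory.integral_image_eq_integral_abs_deriv_smul
    measurableSet_Ioo affine_deriv (affine_inj hcd)]
  rw [MeasureTheory.setIntegral_congr_fun measurableSet_Ioo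
    (fun t ht => affine_kernel_eq hcd ht (α := α))]
  rw [← MeasureTheory.integral_Ioc_eq_integral_Ioo]
  exact beta01_integral h0 h1

/-! ### The `τ ↦ τ^ρ` substitution -/

lemma rpow_deriv {ρ s x : ℝ} (hs : 0 < s) : ∀ τ ∈ Ioo s x,
    HasDerivWithinAt (fun τ : ℝ => τ ^ ρ) (ρ * τ ^ (ρ - 1)) (Ioo s x) τ := fun τ hτ =>
  (Real.hasDerivAt_rpow_const (Or.inl (by linarith [hτ.1] : τ ≠ 0))).hasDerivWithinAt

lemma rpow_inj {ρ s x : ℝ} (hρ : 0 < ρ) (hs : 0 < s) :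
    InjOn (fun τ : ℝ => τ ^ ρ) (Ioo s x) :=
  fun t1 h1 t2 h2 h => by
    have h1' : (0:ℝ) < t1 := lt_trans hs h1.1
    have h2' : (0:ℝ) < t2 := lt_trans hs h2.1
    exact Real.rpow_left_injOn (x := ρ) (ne_of_gt hρ) h1'.le h2'.le h

lemma rpow_image {ρ s x : ℝ} (hρ : 0 < ρ) (hs : 0 < s) (hsx : s < x) :
    (fun τ : ℝ => τ ^ ρ) '' Ioo s x = Ioo (s ^ ρ) (x ^ ρ) := by
  ext u
  constructor
  · rintro ⟨τ, hτ, rfl⟩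
    exact ⟨Real.rpow_lt_rpow hs.le hτ.1 hρ,
      Real.rpow_lt_rpow (by linarith [hτ.1]) hτ.2 hρ⟩
  · intro hu
    have hu0 : 0 < u := lt_trans (Real.rpow_pos_of_pos hs ρ) hu.1
    refine ⟨u ^ ρ⁻¹, ⟨?_, ?_⟩, ?_⟩
    · have := Real.rpow_lt_rpow (Real.rpow_pos_of_pos hs ρ).le hu.1 (inv_pos.mpr hρ)
      rwa [Real.rpow_rpow_inv hs.le hρ.ne'] at this
    · have := Real.rpow_lt_rpow hu0.le hu.2 (inv_pos.mpr hρ)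
      rwa [Real.rpow_rpow_inv (by linarith : (0:ℝ) ≤ x) hρ.ne'] at this
    · exact Real.rpow_inv_rpow hu0.le hρ.ne'

/-! ### The inner kernel integral -/

variable {α ρ : ℝ}

/-- the kernel in the variable `τ`, for fixed `s < τ < x`. -/
noncomputable def kern (ρ α x s τ : ℝ) : ℝ :=
  τ ^ (ρ - 1) * ((x ^ ρ - τ ^ ρ) ^ (-α) * (τ ^ ρ - s ^ ρ) ^ (α - 1))

lemma kern_subst {x s τ : ℝ} (hρ : 0 < ρ) (hτ : 0 < τ) :
    |ρ * τ ^ (ρ - 1)| • ((τ ^ ρ - s ^ ρ) ^ (α - 1) * (x ^ ρ - τ ^ ρ) ^ (-α))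
      = ρ * kern ρ α x s τ := by
  rw [smul_eq_mul, abs_of_pos (by positivity : (0:ℝ) < ρ * τ ^ (ρ - 1)), kern]
  ring

lemma kern_integrable (h0 : 0 < α) (h1 : α < 1) (hρ : 0 < ρ) {s x : ℝ}
    (hs : 0 < s) (hsx : s < x) :
    IntegrableOn (fun τ => kern ρ α x s τ) (Ioo s x) := by
  have hcd : s ^ ρ < x ^ ρ := Real.rpow_lt_rpow hs.le hsx hρ
  have h2 := (betaCD_integrable h0 h1 hcd)
  rw [← rpow_image hρ hs hsx, MeasureTheory.integrableOn_image_iff_integrableOn_abs_deriv_smul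
    measurableSet_Ioo (rpow_deriv hs) (rpow_inj hρ hs)] at h2
  have h3 : IntegrableOn (fun τ => ρ * kern ρ α x s τ) (Ioo s x) := h2.congr_fun
    (fun τ hτ => kern_subst hρ (lt_trans hs hτ.1) (x := x) (s := s)) measurableSet_Ioo
  have h4 := h3.const_mul (ρ⁻¹)
  have h5 : (fun τ => ρ⁻¹ * (ρ * kern ρ α x s τ)) = fun τ => kern ρ α x s τ := by
    funext τ; field_simp
  rwa [h5] at h4

lemma kern_integral (h0 : 0 < α) (h1 : α < 1) (hρ : 0 < ρ) {s x : ℝ}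
    (hs : 0 < s) (hsx : s < x) :
    ∫ τ in Ioo s x, kern ρ α x s τ = Real.Gamma α * Real.Gamma (1 - α) / ρ := by
  have hcd : s ^ ρ < x ^ ρ := Real.rpow_lt_rpow hs.le hsx hρ
  have h2 := betaCD_integral h0 h1 hcd
  rw [← rpow_image hρ hs hsx, MeasureTheory.integral_image_eq_integral_abs_deriv_smul
    measurableSet_Ioo (rpow_deriv hs) (rpow_inj hρ hs)] at h2
  rw [MeasureTheory.setIntegral_congr_fun measurableSet_Ioo
    (fun τ hτ => kern_subst hρ (lt_trans hs hτ.1) (x := x) (s := s) (α := α)),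
    MeasureTheory.integral_const_mul] at h2
  rw [eq_div_iff hρ.ne']
  linarith [h2]

lemma kern_nonneg (h0 : 0 < α) (h1 : α < 1) (hρ : 0 < ρ) {s x τ : ℝ}
    (hs : 0 < s) (hτ : τ ∈ Ioo s x) : 0 ≤ kern ρ α x s τ := by
  have h1 : (0:ℝ) < τ := lt_trans hs hτ.1
  have h2 : (0:ℝ) ≤ x ^ ρ - τ ^ ρ := by
    have := Real.rpow_le_rpow h1.le hτ.2.le hρ.le; linarith
  have h3 : (0:ℝ) ≤ τ ^ ρ - s ^ ρ := by
    have := Real.rpow_le_rpow hs.le hτ.1.le hρ.le; linarith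
  unfold kern; positivity

end Aux

section MainCont

open Set

/-- The main theorem, for functions continuous on all of `ℝ`. -/
theorem main_cont (α ρ a x : ℝ) (hα0 : 0 < α) (hα1 : α < 1) (hρ : 0 < ρ) (ha : 0 < a)
    (hax : a < x) (F : ℝ → ℝ) (hF : Continuous F) :
    genFracIntegral ρ (1 - α) a (genFracIntegral ρ α a F) x
      = ∫ s in a..x, s ^ (ρ - 1) * F s := by
  set μ : Measure ℝ := volume.restrict (Ioc a x) with hμ
  set c : ℝ → ℝ := fun s => s ^ (ρ - 1) * F s with hc
  set k : ℝ → ℝ → ℝ := fun τ s => kern ρ α x s τ * c s with hk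
  set H : ℝ × ℝ → ℝ :=
    fun p => indicator {q : ℝ × ℝ | q.2 ≤ q.1} (fun q => k q.1 q.2) p with hH
  have ΓΓpos : 0 < Real.Gamma α * Real.Gamma (1 - α) :=
    mul_pos (Real.Gamma_pos_of_pos hα0) (Real.Gamma_pos_of_pos (by linarith))
  -- measurability of H
  have Hmeas : Measurable H := by
    apply Measurable.indicator
    · simp only [hk, hc, kern]
      have hFm : Measurable F := hF.measurable
      fun_prop
    · exact measurableSet_le measurable_snd measurable_fst
  -- H as an indicator in τ for fixed s
  have Hτp : ∀ τ s : ℝ, H (τ, s) = indicator (Ici s) (fun τ => k τ s) τ := by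
    intro τ s
    simp only [hH, indicator_apply, mem_setOf_eq, mem_Ici]
  have Hτ : ∀ s : ℝ, (fun τ => H (τ, s)) = indicator (Ici s) (fun τ => k τ s) :=
    fun s => funext fun τ => Hτp τ s
  -- H as an indicator in s for fixed τ
  have Hsp : ∀ τ s : ℝ, H (τ, s) = indicator (Iic τ) (fun s => k τ s) s := by
    intro τ s
    simp only [hH, indicator_apply, mem_setOf_eq, mem_Iic]
  have Hs : ∀ τ : ℝ, (fun s => H (τ, s)) = indicator (Iic τ) (fun s => k τ s) :=
    fun τ => funext fun s => Hsp τ s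
  have hIci : ∀ s ∈ Ioo a x, Ici s ∩ Ioc a x = Icc s x := by
    intro s hs; ext τ
    simp only [mem_inter_iff, mem_Ici, mem_Ioc, mem_Icc]
    constructor
    · rintro ⟨h1, _, h3⟩; exact ⟨h1, h3⟩
    · rintro ⟨h1, h2⟩; exact ⟨h1, lt_of_lt_of_le hs.1 h1, h2⟩
  have hIic : ∀ τ ∈ Ioc a x, Iic τ ∩ Ioc a x = Ioc a τ := by
    intro τ hτ; ext s
    simp only [mem_inter_iff, mem_Iic, mem_Ioc]
    constructor
    · rintro ⟨h1, h2, _⟩; exact ⟨h2, h1⟩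
    · rintro ⟨h1, h2⟩; exact ⟨h2, h1, le_trans h2 hτ.2⟩
  -- integrability in τ for fixed s
  have int_τ : ∀ s ∈ Ioo a x, Integrable (fun τ => H (τ, s)) μ := by
    intro s hs
    rw [Hτ s, hμ, integrable_indicator_iff measurableSet_Ici, IntegrableOn,
      Measure.restrict_restrict measurableSet_Ici, hIci s hs,
      ← IntegrableOn, integrableOn_Icc_iff_integrableOn_Ioo]
    exact (kern_integrable hα0 hα1 hρ (lt_trans ha hs.1) hs.2).mul_const (c s)
  -- value of the norm integral
  have norm_int : ∀ s ∈ Ioo a x,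
      (∫ τ, ‖H (τ, s)‖ ∂μ) = (Real.Gamma α * Real.Gamma (1 - α) / ρ) * |c s| := by
    intro s hs
    have hs0 : 0 < s := lt_trans ha hs.1
    calc (∫ τ, ‖H (τ, s)‖ ∂μ)
        = ∫ τ, indicator (Ici s) (fun τ => |k τ s|) τ ∂μ := by
          congr 1; funext τ
          rw [Real.norm_eq_abs]
          simp only [hH, indicator_apply, mem_setOf_eq, mem_Ici, apply_ite abs, abs_zero]
      _ = ∫ τ in Ioo s x, |k τ s| := by
          rw [hμ, integral_indicator measurableSet_Ici,
            Measure.restrict_restrict measurableSet_Ici, hIci s hs,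
            integral_Icc_eq_integral_Ioo]
      _ = ∫ τ in Ioo s x, kern ρ α x s τ * |c s| := by
          apply setIntegral_congr_fun measurableSet_Ioo
          intro τ hτ
          simp only [hk]
          rw [abs_mul, abs_of_nonneg (kern_nonneg hα0 hα1 hρ hs0 hτ)]
      _ = (Real.Gamma α * Real.Gamma (1 - α) / ρ) * |c s| := by
          rw [MeasureTheory.integral_mul_const, kern_integral hα0 hα1 hρ hs0 hs.2]
  -- a.e. membership in Ioo a x
  have hae : ∀ᵐ s ∂μ, s ∈ Ioo a x := by
    have h1 : ∀ᵐ s ∂μ, s ∈ Ioc a x := ae_restrict_mem measurableSet_Ioc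
    have h2 : ∀ᵐ s : ℝ, s ≠ x := by
      refine ae_iff.mpr ?_
      simp only [not_not]
      rw [show {s : ℝ | s = x} = {x} from rfl]
      exact measure_singleton x
    filter_upwards [h1, ae_restrict_of_ae h2] with s h1 h2
    exact ⟨h1.1, lt_of_le_of_ne h1.2 h2⟩
  -- integrability of the c-related functions
  have hc_cont : ContinuousOn c (Icc a x) := by
    apply ContinuousOn.mul _ hF.continuousOn
    exact fun s hs => (Real.continuousAt_rpow_const s (ρ-1)
      (Or.inl (ne_of_gt (lt_of_lt_of_le ha hs.1)))).continuousWithinAt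
  have hc_int : IntegrableOn c (Ioc a x) :=
    (hc_cont.integrableOn_Icc).mono_set Ioc_subset_Icc_self
  -- the product integrability
  have Hint : Integrable H (μ.prod μ) := by
    rw [MeasureTheory.integrable_prod_iff' Hmeas.aestronglyMeasurable]
    constructor
    · filter_upwards [hae] with s hs
      exact int_τ s hs
    · apply Integrable.congr ((hc_int.abs.const_mul
        (Real.Gamma α * Real.Gamma (1 - α) / ρ)) : Integrable _ μ)
      filter_upwards [hae] with s hs
      exact (norm_int s hs).symm
  -- Fubini
  have swap := MeasureTheory.integral_integral_swap
    (f := fun τ s => H (τ, s)) (μ := μ) (ν := μ) (by exact Hint)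
  -- compute the left side of swap
  have lhs_eq : (∫ τ, ∫ s, H (τ, s) ∂μ ∂μ)
      = ∫ τ in Ioc a x, ∫ s in Ioc a τ, k τ s := by
    rw [hμ]
    apply setIntegral_congr_fun measurableSet_Ioc
    intro τ hτ
    simp only [Hsp]
    rw [integral_indicator measurableSet_Iic,
      Measure.restrict_restrict measurableSet_Iic, hIic τ hτ]
  -- compute the right side of swap
  have rhs_eq : (∫ s, ∫ τ, H (τ, s) ∂μ ∂μ)
      = (Real.Gamma α * Real.Gamma (1 - α) / ρ) * ∫ s in Ioc a x, c s := by
    rw [← MeasureTheory.integral_const_mul, hμ]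
    apply integral_congr_ae
    filter_upwards [hae] with s hs
    simp only [Hτp]
    rw [integral_indicator measurableSet_Ici,
      Measure.restrict_restrict measurableSet_Ici, hIci s hs,
      integral_Icc_eq_integral_Ioo]
    simp only [hk]
    rw [MeasureTheory.integral_mul_const,
      kern_integral hα0 hα1 hρ (lt_trans ha hs.1) hs.2]
  -- assembling
  have key : (∫ τ in Ioc a x, ∫ s in Ioc a τ, k τ s)
      = (Real.Gamma α * Real.Gamma (1 - α) / ρ) * ∫ s in Ioc a x, c s := by
    rw [← lhs_eq, ← rhs_eq]; exact swap
  -- unfold the fractional integrals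
  rw [genFracIntegral, intervalIntegral.integral_of_le hax.le]
  have unfold_inner : ∀ τ ∈ Ioc a x,
      τ ^ (ρ - 1) * (x ^ ρ - τ ^ ρ) ^ ((1 - α) - 1) * (genFracIntegral ρ α a F τ)
        = (ρ ^ (1 - α) / Real.Gamma α) * ∫ s in Ioc a τ, k τ s := by
    intro τ hτ
    rw [genFracIntegral, intervalIntegral.integral_of_le hτ.1.le]
    rw [show (∫ s in Ioc a τ, s ^ (ρ - 1) * (τ ^ ρ - s ^ ρ) ^ (α - 1) * F s)
        = ∫ s in Ioc a τ, s ^ (ρ - 1) * (τ ^ ρ - s ^ ρ) ^ (α - 1) * F s from rfl]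
    have : (∫ s in Ioc a τ, k τ s)
        = τ ^ (ρ - 1) * (x ^ ρ - τ ^ ρ) ^ (-α)
          * ∫ s in Ioc a τ, s ^ (ρ - 1) * (τ ^ ρ - s ^ ρ) ^ (α - 1) * F s := by
      rw [← MeasureTheory.integral_const_mul]
      apply setIntegral_congr_fun measurableSet_Ioc
      intro s _
      simp only [hk, hc, kern]
      ring
    rw [this, show (1 - α) - 1 = -α by ring]
    ring
  rw [setIntegral_congr_fun measurableSet_Ioc unfold_inner,
    MeasureTheory.integral_const_mul, key]
  rw [intervalIntegral.integral_of_le hax.le]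
  rw [show (∫ s in Ioc a x, s ^ (ρ - 1) * F s) = ∫ s in Ioc a x, c s from rfl]
  rw [show (1 : ℝ) - (1 - α) = α by ring]
  have hρα : ρ ^ α * ρ ^ (1 - α) = ρ := by
    rw [← Real.rpow_add hρ, show α + (1 - α) = 1 by ring, Real.rpow_one]
  have hfin : ∀ I : ℝ, ρ ^ α / Real.Gamma (1 - α)
      * (ρ ^ (1 - α) / Real.Gamma α * (Real.Gamma α * Real.Gamma (1 - α) / ρ * I)) = I := by
    intro I
    have e1 : ρ ^ α / Real.Gamma (1 - α)
        * (ρ ^ (1 - α) / Real.Gamma α * (Real.Gamma α * Real.Gamma (1 - α) / ρ * I))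
        = (ρ ^ α * ρ ^ (1 - α)) / ρ * (Real.Gamma α / Real.Gamma α)
          * (Real.Gamma (1 - α) / Real.Gamma (1 - α)) * I := by ring
    rw [e1, hρα, div_self hρ.ne', div_self (Real.Gamma_pos_of_pos hα0).ne',
      div_self (Real.Gamma_pos_of_pos (by linarith : (0:ℝ) < 1 - α)).ne']
    ring
  exact hfin _

end MainCont

/-- For 0 < α < 1, ρ > 0, 0 < a < x and f continuous on [a, x],
(ρI^(1−α)_{a+} (ρI^α_{a+} f))(x) = ∫_a^x s^(ρ−1) f(s) ds. -/
theorem genFracIntegral_comp_eq_weighted_antideriv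
    (α ρ a x : ℝ) (hα0 : 0 < α) (hα1 : α < 1) (hρ : 0 < ρ) (ha : 0 < a) (hax : a < x)
    (f : ℝ → ℝ) (hf : ContinuousOn f (Set.Icc a x)) :
    genFracIntegral ρ (1 - α) a (genFracIntegral ρ α a f) x
      = ∫ s in a..x, s ^ (ρ - 1) * f s := by
  set F : ℝ → ℝ := Set.IccExtend hax.le ((Set.Icc a x).restrict f) with hF
  have hFc : Continuous F := hf.restrict.Icc_extend'
  have hFeq : ∀ t ∈ Set.Icc a x, F t = f t := fun t ht => by
    rw [hF, Set.IccExtend_of_mem hax.le _ ht]; rfl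
  have inner_eq : ∀ τ ∈ Set.Icc a x,
      genFracIntegral ρ α a F τ = genFracIntegral ρ α a f τ := by
    intro τ hτ
    rw [genFracIntegral, genFracIntegral]
    congr 1
    apply intervalIntegral.integral_congr
    intro s hs
    rw [Set.uIcc_of_le hτ.1, Set.mem_Icc] at hs
    simp only [hFeq s ⟨hs.1, le_trans hs.2 hτ.2⟩]
  have outer_eq : genFracIntegral ρ (1 - α) a (genFracIntegral ρ α a F) x
      = genFracIntegral ρ (1 - α) a (genFracIntegral ρ α a f) x := by
    rw [genFracIntegral, genFracIntegral]
    congr 1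
    apply intervalIntegral.integral_congr
    intro τ hτ
    rw [Set.uIcc_of_le hax.le] at hτ
    simp only [inner_eq τ hτ]
  have rhs_eq : (∫ s in a..x, s ^ (ρ - 1) * F s) = ∫ s in a..x, s ^ (ρ - 1) * f s := by
    apply intervalIntegral.integral_congr
    intro s hs
    rw [Set.uIcc_of_le hax.le] at hs
    simp only [hFeq s hs]
  rw [← outer_eq, ← rhs_eq]
  exact main_cont α ρ a x hα0 hα1 hρ ha hax F hFc
end

section
/- (Inverse property.) Let 0 < α < 1, ρ > 0, 0 < a < x be real numbers and let f : ℝ → ℝ be continuous. Then the generalized fractional derivative of order α of the generalized fractional integral of order α of f recovers f: (ρD^α_{a+} (ρI^α_{a+} f))(x) = f(x). -/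
open MeasureTheory Real

section AuxFrac

open Set intervalIntegral

lemma rpow_image_Ioo {ρ b c : ℝ} (hρ : 0 < ρ) (hb : 0 < b) (hbc : b < c) :
    (fun t : ℝ => t ^ ρ) '' Set.Ioo b c = Set.Ioo (b ^ ρ) (c ^ ρ) := by
  have hc : 0 < c := hb.trans hbc
  ext u
  constructor
  · rintro ⟨t, ⟨h1, h2⟩, rfl⟩
    exact ⟨Real.rpow_lt_rpow hb.le h1 hρ, Real.rpow_lt_rpow (hb.trans h1).le h2 hρ⟩
  · rintro ⟨h1, h2⟩
    have hu : 0 < u := lt_trans (Real.rpow_pos_of_pos hb ρ) h1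
    refine ⟨u ^ ρ⁻¹, ⟨?_, ?_⟩, Real.rpow_inv_rpow hu.le hρ.ne'⟩
    · have := Real.rpow_lt_rpow (Real.rpow_pos_of_pos hb ρ).le h1 (inv_pos.mpr hρ)
      rwa [Real.rpow_rpow_inv hb.le hρ.ne'] at this
    · have := Real.rpow_lt_rpow hu.le h2 (inv_pos.mpr hρ)
      rwa [Real.rpow_rpow_inv hc.le hρ.ne'] at this

/-- Power substitution `u = τ^ρ`, valid for arbitrary integrands. -/
lemma integral_rpow_subst {ρ b c : ℝ} (hρ : 0 < ρ) (hb : 0 < b) (hbc : b < c) (h : ℝ → ℝ) :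
    ∫ u in Set.Ioo (b ^ ρ) (c ^ ρ), h u = ∫ τ in Set.Ioo b c, (ρ * τ ^ (ρ - 1)) * h (τ ^ ρ) := by
  rw [← rpow_image_Ioo hρ hb hbc,
    integral_image_eq_integral_abs_deriv_smul measurableSet_Ioo
      (f' := fun τ => ρ * τ ^ (ρ - 1)) (fun τ hτ =>
        (Real.hasDerivAt_rpow_const (Or.inl (ne_of_gt (hb.trans hτ.1)))).hasDerivWithinAt) ?_ h]
  · refine setIntegral_congr_fun measurableSet_Ioo (fun τ hτ => ?_)
    have hτ0 : 0 < τ := hb.trans hτ.1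
    rw [abs_of_pos (by positivity), smul_eq_mul]
  · intro s hs t ht hst
    have hs0 : 0 ≤ s := (hb.trans hs.1).le
    have ht0 : 0 ≤ t := (hb.trans ht.1).le
    exact Real.rpow_left_injOn hρ.ne' hs0 ht0 hst

lemma intervalIntegral_congr_Ioo {E : Type*} [NormedAddCommGroup E] [NormedSpace ℝ E]
    {f g : ℝ → E} {a b : ℝ} (hab : a ≤ b)
    (h : ∀ x ∈ Set.Ioo a b, f x = g x) : ∫ x in a..b, f x = ∫ x in a..b, g x := by
  rw [intervalIntegral.integral_of_le hab, intervalIntegral.integral_of_le hab,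
    MeasureTheory.integral_Ioc_eq_integral_Ioo, MeasureTheory.integral_Ioc_eq_integral_Ioo]
  exact setIntegral_congr_fun measurableSet_Ioo h

lemma real_beta {α : ℝ} (hα0 : 0 < α) (hα1 : α < 1) :
    ∫ t in (0:ℝ)..1, t ^ (α - 1) * (1 - t) ^ (-α) = Real.Gamma α * Real.Gamma (1 - α) := by
  have h1α : 0 < 1 - α := by linarith
  have key : Complex.betaIntegral α (1 - α) =
      ((∫ t in (0:ℝ)..1, t ^ (α - 1) * (1 - t) ^ (-α) : ℝ) : ℂ) := by
    rw [Complex.betaIntegral, ← intervalIntegral.integral_ofReal]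
    apply intervalIntegral_congr_Ioo zero_le_one
    intro t ht
    push_cast
    rw [show (α:ℂ) - 1 = ((α - 1 : ℝ) : ℂ) by push_cast; ring,
      show (1:ℂ) - (α:ℂ) - 1 = ((-α : ℝ) : ℂ) by push_cast; ring,
      show (1:ℂ) - (t:ℂ) = ((1 - t : ℝ) : ℂ) by push_cast; ring,
      ← Complex.ofReal_cpow ht.1.le, ← Complex.ofReal_cpow (by linarith [ht.2] : (0:ℝ) ≤ 1 - t),
      ← Complex.ofReal_mul]
  have := Complex.Gamma_mul_Gamma_eq_betaIntegral
    (s := (α : ℂ)) (t := ((1 - α : ℝ) : ℂ)) (by simpa using hα0) (by simpa using h1α)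
  rw [show ((1 - α : ℝ) : ℂ) = 1 - (α:ℂ) by push_cast; ring, key] at this
  rw [show (1:ℂ) - (α:ℂ) = ((1 - α : ℝ) : ℂ) by push_cast; ring] at this
  have hsum : (α : ℂ) + ((1 - α : ℝ) : ℂ) = 1 := by push_cast; ring
  rw [hsum, Complex.Gamma_one, one_mul, Complex.Gamma_ofReal, Complex.Gamma_ofReal,
    ← Complex.ofReal_mul] at this
  exact_mod_cast this.symm

/-- The beta integral on a general interval. -/
lemma beta_general {α : ℝ} (hα0 : 0 < α) (hα1 : α < 1) {u Y : ℝ} (h : u < Y) :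
    ∫ τ in u..Y, (Y - τ) ^ (-α) * (τ - u) ^ (α - 1) = Real.Gamma α * Real.Gamma (1 - α) := by
  set c := Y - u with hc
  have hc0 : 0 < c := by simp [hc]; linarith
  have s1 : ∫ τ in u..Y, (Y - τ) ^ (-α) * (τ - u) ^ (α - 1)
      = ∫ v in (0:ℝ)..c, (c - v) ^ (-α) * v ^ (α - 1) := by
    have := intervalIntegral.integral_comp_add_right (a := (0:ℝ)) (b := c) (d := u)
      (f := fun τ => (Y - τ) ^ (-α) * (τ - u) ^ (α - 1))
    simp only [zero_add, hc, sub_add_cancel] at this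
    rw [← this]
    congr 1
    ext v
    simp only [hc]
    ring_nf
  have s2 : ∫ v in (0:ℝ)..c, (c - v) ^ (-α) * v ^ (α - 1)
      = c • ∫ t in (0:ℝ)..1, (c - c * t) ^ (-α) * (c * t) ^ (α - 1) := by
    have := intervalIntegral.smul_integral_comp_mul_left (a := (0:ℝ)) (b := 1)
      (f := fun v => (c - v) ^ (-α) * v ^ (α - 1)) c
    simp only [mul_zero, mul_one] at this
    rw [← this]
  have s3 : ∫ t in (0:ℝ)..1, (c - c * t) ^ (-α) * (c * t) ^ (α - 1)
      = c⁻¹ * ∫ t in (0:ℝ)..1, t ^ (α - 1) * (1 - t) ^ (-α) := by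
    rw [← intervalIntegral.integral_const_mul]
    apply intervalIntegral_congr_Ioo zero_le_one
    intro t ht
    have h1t : (0:ℝ) ≤ 1 - t := by linarith [ht.2]
    rw [show c - c * t = c * (1 - t) by ring,
      Real.mul_rpow hc0.le h1t, Real.mul_rpow hc0.le ht.1.le]
    rw [show c ^ (-α) * (1 - t) ^ (-α) * (c ^ (α - 1) * t ^ (α - 1))
        = (c ^ (-α) * c ^ (α - 1)) * (t ^ (α - 1) * (1 - t) ^ (-α)) by ring,
      ← Real.rpow_add hc0, show -α + (α - 1) = -1 by ring, Real.rpow_neg_one]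
  rw [s1, s2, s3, real_beta hα0 hα1, smul_eq_mul]
  field_simp

lemma integrableOn_rpow_sub {β A Y : ℝ} (hβ : -1 < β) (hAY : A ≤ Y) :
    IntegrableOn (fun τ => (Y - τ) ^ β) (Set.Ioo A Y) := by
  have h := (intervalIntegral.intervalIntegrable_rpow' (a := 0) (b := Y - A) hβ).comp_sub_left Y
  simp only [sub_zero, sub_sub_cancel] at h
  exact h.symm.1.mono_set Set.Ioo_subset_Ioc_self

lemma integral_rpow_sub {β A τ : ℝ} (hβ : -1 < β) (h : A ≤ τ) :
    ∫ u in Set.Ioo A τ, (τ - u) ^ β = (τ - A) ^ (β + 1) / (β + 1) := by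
  rw [← MeasureTheory.integral_Ioc_eq_integral_Ioo, ← intervalIntegral.integral_of_le h,
    intervalIntegral.integral_comp_sub_left (fun v => v ^ β) τ, sub_self,
    integral_rpow (Or.inl hβ),
    Real.zero_rpow (by linarith : β + 1 ≠ 0)]
  ring

/-- The kernel of the composed fractional integrals. -/
noncomputable def Kker (α Y : ℝ) (g : ℝ → ℝ) : ℝ × ℝ → ℝ :=
  fun p => if p.2 < p.1 then (Y - p.1) ^ (-α) * ((p.1 - p.2) ^ (α - 1) * g p.2) else 0

lemma Iio_inter_Ioo {A Y τ : ℝ} (hτ : τ ≤ Y) : Set.Iio τ ∩ Set.Ioo A Y = Set.Ioo A τ := by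
  ext u
  simp only [Set.mem_inter_iff, Set.mem_Iio, Set.mem_Ioo]
  constructor
  · rintro ⟨h1, h2, h3⟩; exact ⟨h2, h1⟩
  · rintro ⟨h1, h2⟩; exact ⟨h2, h1, lt_of_lt_of_le h2 hτ⟩

lemma Ioi_inter_Ioo {A Y u : ℝ} (hu : A ≤ u) : Set.Ioi u ∩ Set.Ioo A Y = Set.Ioo u Y := by
  ext τ
  simp only [Set.mem_inter_iff, Set.mem_Ioi, Set.mem_Ioo]
  constructor
  · rintro ⟨h1, h2, h3⟩; exact ⟨h1, h3⟩
  · rintro ⟨h1, h2⟩; exact ⟨h1, lt_of_le_of_lt hu h1, h2⟩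

lemma key_Iio {A Y τ : ℝ} (hτ : τ ≤ Y) (φ : ℝ → ℝ) :
    (∫ u, Set.indicator (Set.Iio τ) φ u ∂(volume.restrict (Set.Ioo A Y)))
      = ∫ u in Set.Ioo A τ, φ u := by
  rw [MeasureTheory.integral_indicator measurableSet_Iio,
    Measure.restrict_restrict measurableSet_Iio, Iio_inter_Ioo hτ]

lemma key_Ioi {A Y u : ℝ} (hu : A ≤ u) (φ : ℝ → ℝ) :
    (∫ τ, Set.indicator (Set.Ioi u) φ τ ∂(volume.restrict (Set.Ioo A Y)))
      = ∫ τ in Set.Ioo u Y, φ τ := by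
  rw [MeasureTheory.integral_indicator measurableSet_Ioi,
    Measure.restrict_restrict measurableSet_Ioi, Ioi_inter_Ioo hu]

lemma Kker_aesm {α A Y : ℝ} (hα0 : 0 < α) (hα1 : α < 1) {g : ℝ → ℝ} (hg : Continuous g) :
    AEStronglyMeasurable (Kker α Y g)
      ((volume.restrict (Set.Ioo A Y)).prod (volume.restrict (Set.Ioo A Y))) := by
  have hVmeas : MeasurableSet {p : ℝ × ℝ | p.2 < p.1} :=
    measurableSet_lt measurable_snd measurable_fst
  have hKind : Kker α Y g = Set.indicator {p : ℝ × ℝ | p.2 < p.1}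
      (fun p => (Y - p.1) ^ (-α) * ((p.1 - p.2) ^ (α - 1) * g p.2)) := by
    funext p; simp only [Set.indicator_apply, Set.mem_setOf_eq, Kker]
  rw [Measure.prod_restrict, hKind, aestronglyMeasurable_indicator_iff hVmeas,
    Measure.restrict_restrict hVmeas]
  apply ContinuousOn.aestronglyMeasurable ?_
    (hVmeas.inter (measurableSet_Ioo.prod measurableSet_Ioo))
  intro p hp
  obtain ⟨hp1, hp2, hp3⟩ := hp
  apply ContinuousAt.continuousWithinAt
  have h1 : ContinuousAt (fun p : ℝ × ℝ => (Y - p.1) ^ (-α)) p :=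
    (Real.continuousAt_rpow_const _ _
        (Or.inl (by simp only [Set.mem_Ioo] at hp2; linarith [hp2.2]))).comp
      ((continuous_const.sub continuous_fst).continuousAt)
  have h2 : ContinuousAt (fun p : ℝ × ℝ => (p.1 - p.2) ^ (α - 1)) p :=
    (Real.continuousAt_rpow_const _ _
        (Or.inl (by simp only [Set.mem_setOf_eq] at hp1; linarith))).comp
      ((continuous_fst.sub continuous_snd).continuousAt)
  exact h1.mul (h2.mul (hg.continuousAt.comp continuous_snd.continuousAt))

lemma Kker_slice {α A Y τ : ℝ} (g : ℝ → ℝ) :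
    (fun u => Kker α Y g (τ, u)) = Set.indicator (Set.Iio τ)
      (fun u => (Y - τ) ^ (-α) * (g u * (τ - u) ^ (α - 1))) := by
  funext u
  simp only [Kker, Set.indicator_apply, Set.mem_Iio]
  by_cases h : u < τ
  · simp only [h, if_true]; ring
  · simp only [h, if_false]

lemma Kker_slice_integrable {α A Y τ M : ℝ} (hα0 : 0 < α) (hτ : τ ∈ Set.Ioo A Y)
    {g : ℝ → ℝ} (hg : Continuous g) (hM : ∀ x ∈ Set.Icc A Y, ‖g x‖ ≤ M) :
    Integrable (fun u => Kker α Y g (τ, u)) (volume.restrict (Set.Ioo A Y)) := by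
  rw [Kker_slice (A := A), integrable_indicator_iff measurableSet_Iio, IntegrableOn,
    Measure.restrict_restrict measurableSet_Iio, Iio_inter_Ioo hτ.2.le]
  apply Integrable.const_mul
  apply Integrable.bdd_mul (c := M)
    (integrableOn_rpow_sub (by linarith) hτ.1.le)
    (hg.aestronglyMeasurable.restrict)
  filter_upwards [ae_restrict_mem measurableSet_Ioo] with u hu
  exact hM u ⟨hu.1.le, (hu.2.trans hτ.2).le⟩

lemma Kker_norm_slice_eq {α A Y τ M : ℝ} (hα0 : 0 < α) (hα1 : α < 1)
    (hτ : τ ∈ Set.Ioo A Y) {g : ℝ → ℝ} (hg : Continuous g)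
    (hM : ∀ x ∈ Set.Icc A Y, ‖g x‖ ≤ M) :
    (∫ u, ‖Kker α Y g (τ, u)‖ ∂(volume.restrict (Set.Ioo A Y)))
      ≤ (Y - τ) ^ (-α) * (M * ((Y - A) ^ α / α)) := by
  have hrw : (fun u => ‖Kker α Y g (τ, u)‖) = Set.indicator (Set.Iio τ)
      (fun u => |(Y - τ) ^ (-α) * ((τ - u) ^ (α - 1) * g u)|) := by
    funext u
    simp only [Kker, Set.indicator_apply, Set.mem_Iio, Real.norm_eq_abs]
    by_cases h : u < τ
    · simp only [h, if_true]
    · simp only [h, if_false, abs_zero]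
  have hY : (0:ℝ) ≤ Y - τ := by linarith [hτ.2]
  have h1 : (0:ℝ) ≤ (Y - τ) ^ (-α) := Real.rpow_nonneg hY _
  rw [hrw, key_Iio hτ.2.le]
  have heq : (∫ u in Set.Ioo A τ, |(Y - τ) ^ (-α) * ((τ - u) ^ (α - 1) * g u)|)
      = ∫ u in Set.Ioo A τ, (Y - τ) ^ (-α) * ((τ - u) ^ (α - 1) * |g u|) := by
    apply setIntegral_congr_fun measurableSet_Ioo
    intro u hu
    have h2 : (0:ℝ) ≤ (τ - u) ^ (α - 1) := Real.rpow_nonneg (by linarith [hu.2]) _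
    simp only [abs_mul, abs_of_nonneg h1, abs_of_nonneg h2]
  rw [heq]
  have hest : (∫ u in Set.Ioo A τ, (Y - τ) ^ (-α) * ((τ - u) ^ (α - 1) * |g u|))
      ≤ ∫ u in Set.Ioo A τ, (Y - τ) ^ (-α) * ((τ - u) ^ (α - 1) * M) := by
    apply setIntegral_mono_on ?_ ?_ measurableSet_Ioo
    · intro u hu
      have h2 : (0:ℝ) ≤ (τ - u) ^ (α - 1) := Real.rpow_nonneg (by linarith [hu.2]) _
      have h3 : |g u| ≤ M := hM u ⟨hu.1.le, (hu.2.trans hτ.2).le⟩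
      exact mul_le_mul_of_nonneg_left
        (mul_le_mul_of_nonneg_left h3 h2) h1
    · have := Kker_slice_integrable (A := A) hα0 hτ hg hM
      rw [Kker_slice (A := A), integrable_indicator_iff measurableSet_Iio, IntegrableOn,
        Measure.restrict_restrict measurableSet_Iio, Iio_inter_Ioo hτ.2.le] at this
      have habs := this.abs
      apply habs.congr
      filter_upwards [ae_restrict_mem measurableSet_Ioo] with u hu
      have h2 : (0:ℝ) ≤ (τ - u) ^ (α - 1) := Real.rpow_nonneg (by linarith [hu.2]) _
      simp only [abs_mul, abs_of_nonneg h1, abs_of_nonneg h2]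
      ring
    · exact ((integrableOn_rpow_sub (Y := τ) (by linarith : (-1:ℝ) < α - 1)
        hτ.1.le).mul_const M).const_mul _
  refine hest.trans ?_
  rw [MeasureTheory.integral_const_mul]
  apply mul_le_mul_of_nonneg_left ?_ h1
  have hcomm : (fun u => (τ - u) ^ (α - 1) * M) = fun u => M * (τ - u) ^ (α - 1) := by
    funext u; ring
  rw [hcomm, MeasureTheory.integral_const_mul,
    integral_rpow_sub (by linarith : (-1:ℝ) < α - 1) hτ.1.le,
    show α - 1 + 1 = α by ring]
  have hM0 : 0 ≤ M := le_trans (norm_nonneg _) (hM A ⟨le_refl A, by linarith [hτ.1, hτ.2]⟩)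
  have h4 : (τ - A) ^ α ≤ (Y - A) ^ α :=
    Real.rpow_le_rpow (by linarith [hτ.1]) (by linarith [hτ.2]) hα0.le
  have h5 : (τ - A) ^ α / α ≤ (Y - A) ^ α / α := by gcongr
  exact mul_le_mul_of_nonneg_left h5 hM0

lemma Kker_integrable {α A Y : ℝ} (hα0 : 0 < α) (hα1 : α < 1) (hAY : A < Y)
    {g : ℝ → ℝ} (hg : Continuous g) :
    Integrable (Kker α Y g)
      ((volume.restrict (Set.Ioo A Y)).prod (volume.restrict (Set.Ioo A Y))) := by
  obtain ⟨M, hM⟩ := (isCompact_Icc (a := A) (b := Y)).exists_bound_of_continuousOn hg.continuousOn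
  rw [integrable_prod_iff (Kker_aesm hα0 hα1 hg)]
  constructor
  · filter_upwards [ae_restrict_mem measurableSet_Ioo] with τ hτ
    exact Kker_slice_integrable hα0 hτ hg hM
  · apply Integrable.mono'
      ((integrableOn_rpow_sub (by linarith : (-1:ℝ) < -α) hAY.le).mul_const
        (M * ((Y - A) ^ α / α)))
      ((Kker_aesm hα0 hα1 hg).norm.integral_prod_right')
    filter_upwards [ae_restrict_mem measurableSet_Ioo] with τ hτ
    rw [Real.norm_eq_abs, abs_of_nonneg (integral_nonneg (fun u => norm_nonneg _))]
    exact Kker_norm_slice_eq hα0 hα1 hτ hg hM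

set_option maxHeartbeats 1000000 in
lemma RL_comp {α A Y : ℝ} (hα0 : 0 < α) (hα1 : α < 1) (hAY : A < Y)
    (g : ℝ → ℝ) (hg : Continuous g) :
    (∫ τ in Set.Ioo A Y, (Y - τ) ^ (-α) * ∫ u in Set.Ioo A τ, (τ - u) ^ (α - 1) * g u)
      = (Real.Gamma α * Real.Gamma (1 - α)) * ∫ u in Set.Ioo A Y, g u := by
  have hint := Kker_integrable (A := A) hα0 hα1 hAY hg
  have hswap := MeasureTheory.integral_integral_swap
    (f := fun τ u => Kker α Y g (τ, u)) hint
  -- identify the left side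
  have hL : (∫ τ, ∫ u, Kker α Y g (τ, u) ∂(volume.restrict (Set.Ioo A Y))
        ∂(volume.restrict (Set.Ioo A Y)))
      = ∫ τ in Set.Ioo A Y, (Y - τ) ^ (-α) * ∫ u in Set.Ioo A τ, (τ - u) ^ (α - 1) * g u := by
    apply setIntegral_congr_fun measurableSet_Ioo
    intro τ hτ
    dsimp only
    have h1 : (fun u => Kker α Y g (τ, u)) = Set.indicator (Set.Iio τ)
        (fun u => (Y - τ) ^ (-α) * ((τ - u) ^ (α - 1) * g u)) := by
      funext u
      simp only [Kker, Set.indicator_apply, Set.mem_Iio]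
    rw [h1, key_Iio hτ.2.le, MeasureTheory.integral_const_mul]
  -- identify the right side
  have hR : (∫ u, ∫ τ, Kker α Y g (τ, u) ∂(volume.restrict (Set.Ioo A Y))
        ∂(volume.restrict (Set.Ioo A Y)))
      = (Real.Gamma α * Real.Gamma (1 - α)) * ∫ u in Set.Ioo A Y, g u := by
    rw [← MeasureTheory.integral_const_mul]
    apply setIntegral_congr_fun measurableSet_Ioo
    intro u hu
    dsimp only
    have h1 : (fun τ => Kker α Y g (τ, u)) = Set.indicator (Set.Ioi u)
        (fun τ => ((Y - τ) ^ (-α) * (τ - u) ^ (α - 1)) * g u) := by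
      funext τ
      simp only [Kker, Set.indicator_apply, Set.mem_Ioi]
      by_cases h : u < τ
      · simp only [h, if_true]; ring
      · simp only [h, if_false]
    rw [h1, key_Ioi hu.1.le, MeasureTheory.integral_mul_const]
    congr 1
    rw [← MeasureTheory.integral_Ioc_eq_integral_Ioo,
      ← intervalIntegral.integral_of_le hu.2.le]
    exact beta_general hα0 hα1 hu.2
  rw [← hL, hswap, hR]

end AuxFrac

/-- The generalized (left-sided) fractional derivative of order 0 < α < 1:
(ρD^α_{a+} f)(x) = x^(1−ρ) · (d/dx)(ρI^(1−α)_{a+} f)(x). -/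
noncomputable def genFracDeriv (ρ α a : ℝ) (f : ℝ → ℝ) (x : ℝ) : ℝ :=
  x ^ (1 - ρ) * deriv (genFracIntegral ρ (1 - α) a f) x

lemma genFracIntegral_eq {α ρ a : ℝ} (hρ : 0 < ρ) (ha : 0 < a)
    (f : ℝ → ℝ) {y : ℝ} (hy : a < y) :
    genFracIntegral ρ α a f y = ((ρ ^ (1 - α) / Real.Gamma α) * ρ⁻¹) *
      ∫ u in Set.Ioo (a ^ ρ) (y ^ ρ), (y ^ ρ - u) ^ (α - 1) * f (|u| ^ ρ⁻¹) := by
  rw [genFracIntegral, intervalIntegral.integral_of_le hy.le,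
    MeasureTheory.integral_Ioc_eq_integral_Ioo,
    integral_rpow_subst hρ ha hy (fun u => (y ^ ρ - u) ^ (α - 1) * f (|u| ^ ρ⁻¹))]
  simp only [← MeasureTheory.integral_const_mul]
  apply setIntegral_congr_fun measurableSet_Ioo
  intro τ hτ
  have hτ0 : 0 < τ := ha.trans hτ.1
  have habs : |τ ^ ρ| ^ ρ⁻¹ = τ := by
    rw [abs_of_pos (Real.rpow_pos_of_pos hτ0 ρ), Real.rpow_rpow_inv hτ0.le hρ.ne']
  have hinv : ρ * ρ⁻¹ = 1 := mul_inv_cancel₀ hρ.ne'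
  dsimp only
  rw [habs]
  linear_combination (-(ρ ^ (1 - α) / Real.Gamma α *
    (τ ^ (ρ - 1) * ((y ^ ρ - τ ^ ρ) ^ (α - 1) * f τ)))) * hinv

/-- Inverse property: For 0 < α < 1, ρ > 0, 0 < a < x and f continuous,
(ρD^α_{a+} (ρI^α_{a+} f))(x) = f(x). -/
theorem genFracDeriv_genFracIntegral
    (α ρ a x : ℝ) (hα0 : 0 < α) (hα1 : α < 1) (hρ : 0 < ρ) (ha : 0 < a) (hax : a < x)
    (f : ℝ → ℝ) (hf : Continuous f) :
    genFracDeriv ρ α a (genFracIntegral ρ α a f) x = f x := by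
  have hΓα : Real.Gamma α ≠ 0 := (Real.Gamma_pos_of_pos hα0).ne'
  have hΓα' : Real.Gamma (1 - α) ≠ 0 := (Real.Gamma_pos_of_pos (by linarith)).ne'
  set g : ℝ → ℝ := fun u => f (|u| ^ ρ⁻¹) with hgdef
  have hgcont : Continuous g := by
    apply hf.comp
    apply continuous_iff_continuousAt.mpr
    intro u
    exact (Real.continuousAt_rpow_const _ _ (Or.inr (inv_pos.mpr hρ).le)).comp
      continuous_abs.continuousAt
  -- the composition identity on `Ioi a`
  have key2 : ∀ y ∈ Set.Ioi a,
      genFracIntegral ρ (1 - α) a (genFracIntegral ρ α a f) y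
        = ∫ s in a..y, s ^ (ρ - 1) * f s := by
    intro y hy
    rw [Set.mem_Ioi] at hy
    have hy0 : 0 < y := ha.trans hy
    have hAY : a ^ ρ < y ^ ρ := Real.rpow_lt_rpow ha.le hy hρ
    rw [genFracIntegral_eq hρ ha _ hy]
    have hcongr : (∫ u in Set.Ioo (a ^ ρ) (y ^ ρ),
          (y ^ ρ - u) ^ (1 - α - 1) * genFracIntegral ρ α a f (|u| ^ ρ⁻¹))
        = ((ρ ^ (1 - α) / Real.Gamma α) * ρ⁻¹) * ∫ u in Set.Ioo (a ^ ρ) (y ^ ρ),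
            (y ^ ρ - u) ^ (-α) * ∫ v in Set.Ioo (a ^ ρ) u, (u - v) ^ (α - 1) * g v := by
      rw [← MeasureTheory.integral_const_mul]
      apply setIntegral_congr_fun measurableSet_Ioo
      intro u hu
      have hu0 : 0 < u := (Real.rpow_pos_of_pos ha ρ).trans hu.1
      have habs : |u| = u := abs_of_pos hu0
      have htu : (|u| ^ ρ⁻¹) ^ ρ = u := by rw [habs, Real.rpow_inv_rpow hu0.le hρ.ne']
      have hat : a < |u| ^ ρ⁻¹ := by
        rw [habs]
        have := Real.rpow_lt_rpow (Real.rpow_pos_of_pos ha ρ).le hu.1 (inv_pos.mpr hρ)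
        rwa [Real.rpow_rpow_inv ha.le hρ.ne'] at this
      dsimp only
      rw [genFracIntegral_eq hρ ha f hat, htu]
      rw [show (1:ℝ) - α - 1 = -α by ring]
      ring
    rw [hcongr, RL_comp hα0 hα1 hAY g hgcont]
    have hsub := integral_rpow_subst hρ ha hy g
    have hrw : (∫ τ in Set.Ioo a y, ρ * τ ^ (ρ - 1) * g (τ ^ ρ))
        = ρ * ∫ s in a..y, s ^ (ρ - 1) * f s := by
      rw [intervalIntegral.integral_of_le hy.le, MeasureTheory.integral_Ioc_eq_integral_Ioo,
        ← MeasureTheory.integral_const_mul]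
      apply setIntegral_congr_fun measurableSet_Ioo
      intro τ hτ
      have hτ0 : 0 < τ := ha.trans hτ.1
      have habs : |τ ^ ρ| ^ ρ⁻¹ = τ := by
        rw [abs_of_pos (Real.rpow_pos_of_pos hτ0 ρ), Real.rpow_rpow_inv hτ0.le hρ.ne']
      simp only [hgdef]
      rw [habs]
      ring
    rw [hsub, hrw]
    have hρρ : ρ ^ (α:ℝ) * ρ ^ (1 - α) = ρ := by
      rw [← Real.rpow_add hρ, show α + (1 - α) = (1:ℝ) by ring, Real.rpow_one]
    have hfin : (ρ ^ (1 - (1 - α)) / Real.Gamma (1 - α) * ρ⁻¹) *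
        ((ρ ^ (1 - α) / Real.Gamma α * ρ⁻¹) * ((Real.Gamma α * Real.Gamma (1 - α)) * ρ)) = 1 := by
      rw [show (1:ℝ) - (1 - α) = α by ring]
      field_simp
      linear_combination hρρ
    linear_combination (∫ s in a..y, s ^ (ρ - 1) * f s) * hfin
  -- derivative of the primitive
  have hd : HasDerivAt (fun y => ∫ s in a..y, s ^ (ρ - 1) * f s) (x ^ (ρ - 1) * f x) x := by
    apply intervalIntegral.integral_hasDerivAt_right
    · apply ContinuousOn.intervalIntegrable
      intro s hs
      rw [Set.uIcc_of_le hax.le] at hs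
      have hs0 : 0 < s := lt_of_lt_of_le ha hs.1
      exact ((Real.continuousAt_rpow_const _ _ (Or.inl hs0.ne')).mul
        hf.continuousAt).continuousWithinAt
    · apply ContinuousOn.stronglyMeasurableAtFilter (s := Set.Ioi 0) isOpen_Ioi
      · intro s hs
        exact ((Real.continuousAt_rpow_const _ _ (Or.inl (ne_of_gt hs))).mul
          hf.continuousAt).continuousWithinAt
      · exact ha.trans hax
    · exact (Real.continuousAt_rpow_const _ _ (Or.inl (ha.trans hax).ne')).mul hf.continuousAt
  have hev : genFracIntegral ρ (1 - α) a (genFracIntegral ρ α a f)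
      =ᶠ[nhds x] fun y => ∫ s in a..y, s ^ (ρ - 1) * f s :=
    Filter.eventuallyEq_of_mem (isOpen_Ioi.mem_nhds hax) key2
  rw [genFracDeriv, hev.deriv_eq, hd.deriv, ← mul_assoc, ← Real.rpow_add (ha.trans hax),
    show (1 - ρ) + (ρ - 1) = (0:ℝ) by ring, Real.rpow_zero, one_mul]
end
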